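/- Let d be a squarefree integer with d ≠ 0, 1 and let a, b be integers with b ≠ 0. Then Im((a + b√d)³) = 3a²b + b³d equals 0 if and only if d = −3 and a = ±b. -/

import Mathlib

/-- Let `d` be a squarefree integer with `d ≠ 0, 1` and let `a, b` be integers with `b ≠ 0`.
Then `Im((a + b√d)³) = 3a²b + b³d` equals `0` if and only if `d = −3` and `a = ±b`. -/
theorem stmt_4 (d : ℤ) (hd : Squarefree d) (hd0 : d ≠ 0) (hd1 : d ≠ 1)
    (a b : ℤ) (hb : b ≠ 0) :
    3 * a ^ 2 * b + b ^ 3 * d = 0 ↔ d = -3 ∧ (a = b ∨ a = -b) := by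
  constructor
  · intro h
    -- factor out b
    have h1 : b * (3 * a ^ 2 + b ^ 2 * d) = 0 := by ring_nf; linarith [h]
    have h2 : 3 * a ^ 2 + b ^ 2 * d = 0 := by
      rcases mul_eq_zero.mp h1 with h' | h'
      · exact absurd h' hb
      · exact h'
    set g : ℤ := (Int.gcd a b : ℤ) with hg
    have hgpos : 0 < g := by
      have := Int.gcd_pos_of_ne_zero_right a hb
      rw [hg]; exact_mod_cast this
    have hga : g ∣ a := Int.gcd_dvd_left a b
    have hgb : g ∣ b := Int.gcd_dvd_right a b
    obtain ⟨a', ha'⟩ := hga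
    obtain ⟨b', hb'⟩ := hgb
    have hb'0 : b' ≠ 0 := by
      rintro rfl; simp at hb'; exact hb (by omega)
    have hcop : IsCoprime a' b' := by
      have h' : Int.gcd a b = g.natAbs := by
        simp [hg]
      have := Int.gcd_div_gcd_div_gcd (i := a) (j := b)
        (Int.gcd_pos_of_ne_zero_right a hb)
      rw [Int.isCoprime_iff_gcd_eq_one]
      have ea : a / g = a' := by rw [ha']; exact Int.mul_ediv_cancel_left _ (by positivity)
      have eb : b / g = b' := by rw [hb']; exact Int.mul_ediv_cancel_left _ (by positivity)
      rwa [ea, eb] at this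
    have h3 : 3 * a' ^ 2 + b' ^ 2 * d = 0 := by
      have : g ^ 2 * (3 * a' ^ 2 + b' ^ 2 * d) = 0 := by
        rw [ha', hb'] at h2; ring_nf at h2 ⊢; linarith [h2]
      have hg2 : g ^ 2 ≠ 0 := by positivity
      exact (mul_eq_zero.mp this).resolve_left hg2
    -- b'^2 ∣ 3
    have hdvd : b' ^ 2 ∣ 3 := by
      have hdvd3a : b' ^ 2 ∣ 3 * a' ^ 2 := ⟨-d, by linarith [h3]⟩
      have : IsCoprime (b' ^ 2) (a' ^ 2) := (hcop.symm.pow)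
      exact this.dvd_of_dvd_mul_right hdvd3a
    have hle : b' ^ 2 ≤ 3 := Int.le_of_dvd (by norm_num) hdvd
    have hbnd : -1 ≤ b' ∧ b' ≤ 1 := by constructor <;> nlinarith
    have hb'2 : b' ^ 2 = 1 := by
      obtain ⟨h5, h6⟩ := hbnd
      interval_cases b'
      · norm_num
      · exact absurd rfl hb'0
      · norm_num
    have hd' : d = -3 * a' ^ 2 := by
      rw [hb'2] at h3; linarith [h3]
    have ha'u : IsUnit a' := by
      apply hd
      exact ⟨-3, by rw [hd']; ring⟩
    have ha'2 : a' ^ 2 = 1 := by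
      rcases Int.isUnit_iff.mp ha'u with h' | h' <;> simp [h']
    have hdm3 : d = -3 := by rw [hd', ha'2]; ring
    refine ⟨hdm3, ?_⟩
    have hab : a ^ 2 = b ^ 2 := by
      rw [hdm3] at h2; nlinarith [h2]
    have : (a - b) * (a + b) = 0 := by ring_nf; nlinarith [hab]
    rcases mul_eq_zero.mp this with h' | h'
    · left; omega
    · right; omega
  · rintro ⟨rfl, rfl | rfl⟩ <;> ring
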